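/- The number of directed trees on a finite set $I$ (directed graphs with no loops or cycles, exactly one vertex of out-degree 0, all others of out-degree 1) is $|I|^{|I|-1}$. -/

import Mathlib

/-- A directed tree on a set `I`, encoded by the map `p` sending each vertex to the
endpoint of its unique outgoing edge; the root `r` (the unique vertex of out-degree `0`)
is sent to itself, and every vertex reaches the root by iterating `p`
(which encodes the absence of loops and cycles). -/
def IsTreeFn {I : Type*} (p : I → I) : Prop :=
  ∃ r : I, p r = r ∧ ∀ i : I, ∃ k : ℕ, p^[k] i = r

open Function

noncomputable section JoyalAux

open scoped Classical

set_option linter.unusedSectionVars false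

variable {I : Type*} [Fintype I] [Nonempty I]

/-- If `p` agrees with `f` off `S` and some `f`-iterate of `x` lands in `S`,
then some `p`-iterate of `x` lands in `S`. -/
lemma hit_aux {I : Type*} {S : Set I} {p f : I → I}
    (hagree : ∀ x, x ∉ S → p x = f x) :
    ∀ (k : ℕ) (x : I), f^[k] x ∈ S → ∃ m, p^[m] x ∈ S := by
  intro k
  induction k with
  | zero => exact fun x hx => ⟨0, hx⟩
  | succ k ih =>
    intro x hx
    by_cases h : x ∈ S
    · exact ⟨0, h⟩
    · rw [Function.iterate_succ_apply] at hx
      obtain ⟨m, hm⟩ := ih (f x) hx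
      exact ⟨m + 1, by rw [Function.iterate_succ_apply, hagree x h]; exact hm⟩

lemma pigeon_iter {α : Type*} [Finite α] (g : α → α) (x : α) :
    ∃ i j, i < j ∧ g^[i] x = g^[j] x := by
  obtain ⟨i, j, hne, h⟩ := Finite.exists_ne_map_eq_of_infinite (fun k : ℕ => g^[k] x)
  rcases lt_or_gt_of_ne hne with h' | h'
  · exact ⟨i, j, h', h⟩
  · exact ⟨j, i, h', h.symm⟩

lemma exists_iter_periodic {α : Type*} [Finite α] (g : α → α) (x : α) :
    ∃ k m, 0 < m ∧ g^[m] (g^[k] x) = g^[k] x := by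
  obtain ⟨i, j, hij, h⟩ := pigeon_iter g x
  refine ⟨i, j - i, by omega, ?_⟩
  rw [← Function.iterate_add_apply, Nat.sub_add_cancel hij.le, ← h]

lemma inj_periodic {α : Type*} [Finite α] {g : α → α} (hg : Function.Injective g) (x : α) :
    ∃ m, 0 < m ∧ g^[m] x = x := by
  obtain ⟨i, j, hij, h⟩ := pigeon_iter g x
  refine ⟨j - i, by omega, (hg.iterate i) ?_⟩
  rw [← Function.iterate_add_apply]
  rw [Nat.add_sub_cancel' hij.le, ← h]

/-- The set of periodic points of `f`. -/
def Per (f : I → I) : Set I := {x | ∃ m, 0 < m ∧ f^[m] x = x}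

lemma per_mapsTo (f : I → I) : ∀ x ∈ Per f, f x ∈ Per f := by
  rintro x ⟨m, hm, hx⟩
  exact ⟨m, hm, by rw [← Function.iterate_succ_apply, Function.iterate_succ_apply', hx]⟩

/-- Forests rooted at `S`: functions fixing `S` pointwise, with every point eventually
reaching `S`. -/
def Forest (S : Set I) : Type _ :=
  {p : I → I // (∀ s ∈ S, p s = s) ∧ ∀ i, ∃ k, p^[k] i ∈ S}

/-- The decomposition of an endofunction into its permutation part and forest part. -/
def psi (x : Σ S : Set I, Equiv.Perm ↥S × Forest S) : I → I :=
  fun i => if h : i ∈ x.1 then ((x.2.1 ⟨i, h⟩ : ↥x.1) : I) else x.2.2.1 i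

lemma psi_mem {S : Set I} (σ : Equiv.Perm ↥S) (p : Forest S) {i : I} (h : i ∈ S) :
    psi ⟨S, σ, p⟩ i = ((σ ⟨i, h⟩ : ↥S) : I) := dif_pos h

lemma psi_not_mem {S : Set I} (σ : Equiv.Perm ↥S) (p : Forest S) {i : I} (h : i ∉ S) :
    psi ⟨S, σ, p⟩ i = p.1 i := dif_neg h

lemma psi_mapsTo {S : Set I} (σ : Equiv.Perm ↥S) (p : Forest S) {i : I} (h : i ∈ S) :
    psi ⟨S, σ, p⟩ i ∈ S := by rw [psi_mem σ p h]; exact (σ ⟨i, h⟩).2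

lemma psi_iter_coe {S : Set I} (σ : Equiv.Perm ↥S) (p : Forest S) (k : ℕ) (y : ↥S) :
    (psi ⟨S, σ, p⟩)^[k] (y : I) = (((⇑σ)^[k] y : ↥S) : I) := by
  induction k with
  | zero => rfl
  | succ k ih =>
    rw [Function.iterate_succ_apply', Function.iterate_succ_apply', ih]
    exact psi_mem σ p _

lemma per_psi {S : Set I} (σ : Equiv.Perm ↥S) (p : Forest S) :
    Per (psi ⟨S, σ, p⟩) = S := by
  set f := psi ⟨S, σ, p⟩ with hf
  ext x
  simp only [Per, Set.mem_setOf_eq]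
  constructor
  · rintro ⟨m, hm, hx⟩
    by_contra h
    obtain ⟨k₀, hk₀⟩ := p.2.2 x
    obtain ⟨k, hk⟩ := hit_aux (f := p.1) (fun y hy => psi_not_mem σ p hy) k₀ x hk₀
    have hinv : ∀ j, f^[k + j] x ∈ S := by
      intro j
      induction j with
      | zero => simpa using hk
      | succ j ih =>
        show f^[(k + j) + 1] x ∈ S
        rw [Function.iterate_succ_apply']
        exact psi_mapsTo σ p ih
    have hfix : f^[m * k] x = x := by
      rw [Function.iterate_mul]
      exact Function.iterate_fixed hx k
    have hkm : k ≤ m * k := Nat.le_mul_of_pos_left k hm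
    have := hinv (m * k - k)
    rw [show k + (m * k - k) = m * k by omega, hfix] at this
    exact h this
  · intro hx
    obtain ⟨m, hm, hσ⟩ := inj_periodic σ.injective ⟨x, hx⟩
    refine ⟨m, hm, ?_⟩
    have := psi_iter_coe σ p m ⟨x, hx⟩
    rw [hσ] at this
    exact this

lemma psi_bijective : Function.Bijective (psi (I := I)) := by
  constructor
  · rintro ⟨S, σ, p⟩ ⟨S', σ', p'⟩ h
    have hS : S = S' := by rw [← per_psi σ p, ← per_psi σ' p', h]
    subst hS
    have hσ : σ = σ' := by
      ext y
      have hy := congrFun h (y : I)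
      rw [psi_mem σ p y.2, psi_mem σ' p' y.2] at hy
      exact hy
    have hp : p = p' := by
      apply Subtype.ext; funext i
      by_cases hi : i ∈ S
      · rw [p.2.1 i hi, p'.2.1 i hi]
      · have hy := congrFun h i
        rw [psi_not_mem σ p hi, psi_not_mem σ' p' hi] at hy
        exact hy
    rw [hσ, hp]
  · intro f
    have hmap : ∀ x ∈ Per f, f x ∈ Per f := per_mapsTo f
    set g : ↥(Per f) → ↥(Per f) := fun y => ⟨f y, hmap y y.2⟩ with hg
    have hgsurj : Function.Surjective g := by
      rintro ⟨x, m, hm, hx⟩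
      have hmem : f^[m - 1] x ∈ Per f := by
        refine ⟨m, hm, ?_⟩
        rw [← Function.iterate_add_apply, Nat.add_comm, Function.iterate_add_apply, hx]
      refine ⟨⟨f^[m - 1] x, hmem⟩, Subtype.ext ?_⟩
      show f (f^[m - 1] x) = x
      rw [← Function.iterate_succ_apply' f (m - 1) x,
        show (m - 1).succ = m by omega]
      exact hx
    have hgbij : Function.Bijective g :=
      ⟨Finite.injective_iff_surjective.mpr hgsurj, hgsurj⟩
    set σ : Equiv.Perm ↥(Per f) := Equiv.ofBijective g hgbij with hσ
    set p : I → I := fun i => if i ∈ Per f then i else f i with hp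
    have hforest : (∀ s ∈ Per f, p s = s) ∧ ∀ i, ∃ k, p^[k] i ∈ Per f := by
      refine ⟨fun s hs => if_pos hs, fun i => ?_⟩
      obtain ⟨k, m, hm, hper⟩ := exists_iter_periodic f i
      exact hit_aux (fun y hy => if_neg hy) k i ⟨m, hm, hper⟩
    refine ⟨⟨Per f, σ, ⟨p, hforest⟩⟩, ?_⟩
    funext i
    by_cases hi : i ∈ Per f
    · exact psi_mem σ (⟨p, hforest⟩ : Forest (Per f)) hi
    · exact (psi_not_mem σ (⟨p, hforest⟩ : Forest (Per f)) hi).trans (if_neg hi)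

/-- Linear structures: a set with an enumeration by `Fin`, together with a forest. -/
def treeFnOf (S : Set I) (e : ↥S ≃ Fin (Nat.card ↥S)) (p : I → I) : I → I :=
  fun x =>
    if h : x ∈ S then
      if hlt : ((e ⟨x, h⟩ : Fin (Nat.card ↥S)) : ℕ) + 1 < Nat.card ↥S then
        ((e.symm ⟨(e ⟨x, h⟩ : ℕ) + 1, hlt⟩ : ↥S) : I)
      else x
    else p x

lemma tf_not_mem {S : Set I} (e : ↥S ≃ Fin (Nat.card ↥S)) (p : I → I) {x : I} (h : x ∉ S) :
    treeFnOf S e p x = p x := dif_neg h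

lemma tf_mem_lt {S : Set I} (e : ↥S ≃ Fin (Nat.card ↥S)) (p : I → I) {x : I} (h : x ∈ S)
    (hlt : ((e ⟨x, h⟩ : Fin (Nat.card ↥S)) : ℕ) + 1 < Nat.card ↥S) :
    treeFnOf S e p x = ((e.symm ⟨(e ⟨x, h⟩ : ℕ) + 1, hlt⟩ : ↥S) : I) := by
  rw [treeFnOf, dif_pos h, dif_pos hlt]

lemma tf_mem_last {S : Set I} (e : ↥S ≃ Fin (Nat.card ↥S)) (p : I → I) {x : I} (h : x ∈ S)
    (hlt : ¬ ((e ⟨x, h⟩ : Fin (Nat.card ↥S)) : ℕ) + 1 < Nat.card ↥S) :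
    treeFnOf S e p x = x := by
  rw [treeFnOf, dif_pos h, dif_neg hlt]

lemma tf_step {S : Set I} (e : ↥S ≃ Fin (Nat.card ↥S)) (p : I → I)
    (z : Fin (Nat.card ↥S)) (hlt : (z : ℕ) + 1 < Nat.card ↥S) :
    treeFnOf S e p ((e.symm z : ↥S) : I) = ((e.symm ⟨(z : ℕ) + 1, hlt⟩ : ↥S) : I) := by
  rw [treeFnOf]
  rw [dif_pos (e.symm z).2]
  simp only [Subtype.coe_eta, Equiv.apply_symm_apply]
  rw [dif_pos hlt]

lemma tf_last {S : Set I} (e : ↥S ≃ Fin (Nat.card ↥S)) (p : I → I)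
    (z : Fin (Nat.card ↥S)) (hlt : ¬ ((z : ℕ) + 1 < Nat.card ↥S)) :
    treeFnOf S e p ((e.symm z : ↥S) : I) = ((e.symm z : ↥S) : I) := by
  rw [treeFnOf]
  rw [dif_pos (e.symm z).2]
  simp only [Subtype.coe_eta, Equiv.apply_symm_apply]
  rw [dif_neg hlt]

lemma tf_mapsTo {S : Set I} (e : ↥S ≃ Fin (Nat.card ↥S)) (p : I → I)
    {y : I} (hy : y ∈ S) : treeFnOf S e p y ∈ S := by
  rw [treeFnOf, dif_pos hy]
  split
  · exact (e.symm _).2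
  · exact hy

lemma forest_card_pos {S : Set I} (p : Forest S) : 0 < Nat.card ↥S := by
  obtain ⟨k, hk⟩ := p.2.2 (Classical.arbitrary I)
  have : Nonempty ↥S := ⟨⟨_, hk⟩⟩
  exact Nat.card_pos

lemma tf_climb {S : Set I} (e : ↥S ≃ Fin (Nat.card ↥S)) (p : I → I)
    (hpos : 0 < Nat.card ↥S) :
    ∀ (d : ℕ) (y : ↥S), Nat.card ↥S - 1 - ((e y : Fin (Nat.card ↥S)) : ℕ) ≤ d →
      ∃ t, (treeFnOf S e p)^[t] (y : I)
        = ((e.symm ⟨Nat.card ↥S - 1, by omega⟩ : ↥S) : I) := by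
  have last_case : ∀ (y : ↥S), ((e y : Fin (Nat.card ↥S)) : ℕ) = Nat.card ↥S - 1 →
      (y : I) = ((e.symm ⟨Nat.card ↥S - 1, by omega⟩ : ↥S) : I) := by
    intro y hy
    have h1 : e y = ⟨Nat.card ↥S - 1, by omega⟩ := Fin.ext hy
    rw [← e.symm_apply_apply y, h1]
  intro d
  induction d with
  | zero =>
    intro y hy
    have hlast : ((e y : Fin (Nat.card ↥S)) : ℕ) = Nat.card ↥S - 1 := by
      have := (e y).2; omega
    exact ⟨0, last_case y hlast⟩
  | succ d ih =>
    intro y hy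
    by_cases hlast : ((e y : Fin (Nat.card ↥S)) : ℕ) = Nat.card ↥S - 1
    · exact ⟨0, last_case y hlast⟩
    · have hlt : ((e y : Fin (Nat.card ↥S)) : ℕ) + 1 < Nat.card ↥S := by
        have := (e y).2; omega
      have hstep : treeFnOf S e p (y : I)
          = ((e.symm ⟨((e y : Fin (Nat.card ↥S)) : ℕ) + 1, hlt⟩ : ↥S) : I) := by
        have := tf_step e p (e y) hlt
        rwa [e.symm_apply_apply y] at this
      set y' : ↥S := e.symm ⟨((e y : Fin (Nat.card ↥S)) : ℕ) + 1, hlt⟩ with hy'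
      have hidx : ((e y' : Fin (Nat.card ↥S)) : ℕ)
          = ((e y : Fin (Nat.card ↥S)) : ℕ) + 1 := by
        rw [hy', e.apply_symm_apply]
      obtain ⟨t, ht⟩ := ih y' (by rw [hidx]; omega)
      refine ⟨t + 1, ?_⟩
      rw [Function.iterate_add_apply, Function.iterate_one, hstep]
      exact ht

lemma istree_treeFnOf {S : Set I} (e : ↥S ≃ Fin (Nat.card ↥S)) (p : Forest S) :
    IsTreeFn (treeFnOf S e p.1) := by
  have hpos : 0 < Nat.card ↥S := forest_card_pos p
  refine ⟨((e.symm ⟨Nat.card ↥S - 1, by omega⟩ : ↥S) : I), ?_, ?_⟩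
  · exact tf_last e p.1 ⟨Nat.card ↥S - 1, by omega⟩ (by simp; omega)
  · intro i
    obtain ⟨k, hk⟩ := p.2.2 i
    obtain ⟨k', hk'⟩ := hit_aux (fun y hy => tf_not_mem e p.1 hy) k i hk
    obtain ⟨t, ht⟩ := tf_climb e p.1 hpos _ ⟨(treeFnOf S e p.1)^[k'] i, hk'⟩ le_rfl
    exact ⟨t + k', by rw [Function.iterate_add_apply]; exact ht⟩

/-- The decomposition of a marked tree into the path from the mark to the root
and the hanging forest. -/
def psi' (x : Σ S : Set I, (↥S ≃ Fin (Nat.card ↥S)) × Forest S) :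
    I × {p : I → I // IsTreeFn p} :=
  ⟨((x.2.1.symm ⟨0, forest_card_pos x.2.2⟩ : ↥x.1) : I),
    ⟨treeFnOf x.1 x.2.1 x.2.2.1, istree_treeFnOf x.2.1 x.2.2⟩⟩

lemma symm_eq_iter {S : Set I} (e : ↥S ≃ Fin (Nat.card ↥S)) (p : Forest S)
    (j : ℕ) (hj : j < Nat.card ↥S) :
    ((e.symm ⟨j, hj⟩ : ↥S) : I)
      = (treeFnOf S e p.1)^[j] ((e.symm ⟨0, forest_card_pos p⟩ : ↥S) : I) := by
  induction j with
  | zero => rfl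
  | succ j ih =>
    have hj' : j < Nat.card ↥S := by omega
    rw [Function.iterate_succ_apply', ← ih hj']
    exact (tf_step e p.1 ⟨j, hj'⟩ hj).symm

lemma range_treeFnOf {S : Set I} (e : ↥S ≃ Fin (Nat.card ↥S)) (p : Forest S) :
    S = Set.range (fun k : ℕ => (treeFnOf S e p.1)^[k]
      ((e.symm ⟨0, forest_card_pos p⟩ : ↥S) : I)) := by
  ext x
  constructor
  · intro hx
    refine ⟨((e ⟨x, hx⟩ : Fin (Nat.card ↥S)) : ℕ), ?_⟩
    show (treeFnOf S e p.1)^[((e ⟨x, hx⟩ : Fin (Nat.card ↥S)) : ℕ)]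
      ((e.symm ⟨0, forest_card_pos p⟩ : ↥S) : I) = x
    rw [← symm_eq_iter e p _ (e ⟨x, hx⟩).2]
    simp
    exact congrArg Subtype.val (e.symm_apply_apply ⟨x, hx⟩)
  · rintro ⟨k, rfl⟩
    induction k with
    | zero => exact (e.symm ⟨0, forest_card_pos p⟩).2
    | succ k ih =>
      show (treeFnOf S e p.1)^[k + 1] ((e.symm ⟨0, forest_card_pos p⟩ : ↥S) : I) ∈ S
      rw [Function.iterate_succ_apply']
      exact tf_mapsTo e p.1 ih

lemma reach_after {q : I → I} {r : I} (hr : q r = r) {v : I} {k : ℕ} (hk : q^[k] v = r) :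
    ∀ j, k ≤ j → q^[j] v = r := by
  intro j hj
  have h1 : q^[(j - k) + k] v = q^[j - k] (q^[k] v) := Function.iterate_add_apply q (j - k) k v
  rw [Nat.sub_add_cancel hj] at h1
  rw [h1, hk]
  exact Function.iterate_fixed hr (j - k)

lemma psi'_bijective : Function.Bijective (psi' (I := I)) := by
  constructor
  · rintro ⟨S, e, p⟩ ⟨S', e', p'⟩ h
    simp only [psi', Prod.mk.injEq, Subtype.mk.injEq] at h
    obtain ⟨hv, hq⟩ := h
    have hS : S = S' := by
      have h1 := range_treeFnOf e p
      rw [hq, hv] at h1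
      exact h1.trans (range_treeFnOf e' p').symm
    subst hS
    have hsymm : ∀ (j : ℕ) (hj : j < Nat.card ↥S), e.symm ⟨j, hj⟩ = e'.symm ⟨j, hj⟩ := by
      intro j hj
      apply Subtype.coe_injective
      show ((e.symm ⟨j, hj⟩ : ↥S) : I) = ((e'.symm ⟨j, hj⟩ : ↥S) : I)
      rw [symm_eq_iter e p j hj, symm_eq_iter e' p' j hj, hq, hv]
    have he : e = e' := by
      have h2 : e.symm = e'.symm := by
        apply Equiv.ext
        rintro ⟨j, hj⟩
        exact hsymm j hj
      rw [← Equiv.symm_symm e, h2, Equiv.symm_symm]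
    have hp : p = p' := by
      apply Subtype.ext; funext x
      by_cases hx : x ∈ S
      · rw [p.2.1 x hx, p'.2.1 x hx]
      · rw [← tf_not_mem e p.1 hx, ← tf_not_mem e' p'.1 hx, hq]
    rw [he, hp]
  · rintro ⟨v, q, hq⟩
    obtain ⟨r, hroot, hreach⟩ := hq
    have hex : ∃ k, q^[k] v = r := hreach v
    set m0 := Nat.find hex with hm0
    have hm0spec : q^[m0] v = r := Nat.find_spec hex
    have horbit_inj : ∀ i j, i ≤ m0 → j ≤ m0 → q^[i] v = q^[j] v → i = j := by
      have key : ∀ i j, i < j → j ≤ m0 → q^[i] v ≠ q^[j] v := by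
        intro i j hij hj h
        set c := j - i with hc
        have hcpos : 0 < c := by omega
        have hci : c + i = j := by omega
        have hper : ∀ t, q^[i + c * t] v = q^[i] v := by
          intro t
          induction t with
          | zero => simp
          | succ t ih =>
            calc q^[i + c * (t + 1)] v = q^[c + (i + c * t)] v := by ring_nf
              _ = q^[c] (q^[i + c * t] v) := Function.iterate_add_apply q c (i + c * t) v
              _ = q^[c] (q^[i] v) := by rw [ih]
              _ = q^[c + i] v := (Function.iterate_add_apply q c i v).symm
              _ = q^[j] v := by rw [hci]
              _ = q^[i] v := h.symm
        have hbig : m0 ≤ i + c * m0 := by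
          have := Nat.le_mul_of_pos_left m0 hcpos
          omega
        have hir : q^[i] v = r := by
          rw [← hper m0]
          exact reach_after hroot hm0spec _ hbig
        exact Nat.find_min hex (by omega : i < m0) hir
      intro i j hi hj h
      rcases lt_trichotomy i j with h' | h' | h'
      · exact absurd h (key i j h' hj)
      · exact h'
      · exact absurd h.symm (key j i h' hi)
    set S : Set I := {x | ∃ k, k ≤ m0 ∧ q^[k] v = x} with hSdef
    have hE : Function.Bijective
        (fun k : Fin (m0 + 1) => (⟨q^[(k : ℕ)] v, ⟨(k : ℕ), Nat.lt_succ_iff.mp k.2, rfl⟩⟩ : ↥S)) := by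
      constructor
      · intro a b hab
        exact Fin.ext (horbit_inj a b (Nat.lt_succ_iff.mp a.2) (Nat.lt_succ_iff.mp b.2)
          (congrArg Subtype.val hab))
      · rintro ⟨x, k, hk, hx⟩
        exact ⟨⟨k, Nat.lt_succ_of_le hk⟩, Subtype.ext hx⟩
    set e₁ : Fin (m0 + 1) ≃ ↥S := Equiv.ofBijective _ hE with he₁
    have hcard : Nat.card ↥S = m0 + 1 := by
      rw [← Nat.card_congr e₁, Nat.card_eq_fintype_card, Fintype.card_fin]
    set e : ↥S ≃ Fin (Nat.card ↥S) := e₁.symm.trans (finCongr hcard.symm) with he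
    set p : I → I := fun i => if i ∈ S then i else q i with hp
    have hforest : (∀ s ∈ S, p s = s) ∧ ∀ i, ∃ k, p^[k] i ∈ S := by
      refine ⟨fun s hs => if_pos hs, fun i => ?_⟩
      obtain ⟨k, hk⟩ := hreach i
      exact hit_aux (fun y hy => if_neg hy) k i (by rw [hk]; exact ⟨m0, le_rfl, hm0spec⟩)
    have hesymm : ∀ (j : ℕ) (hj : j < Nat.card ↥S), ((e.symm ⟨j, hj⟩ : ↥S) : I) = q^[j] v := by
      intro j hj
      rfl
    refine ⟨⟨S, e, ⟨p, hforest⟩⟩, ?_⟩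
    have hfst : ((e.symm ⟨0, forest_card_pos ⟨p, hforest⟩⟩ : ↥S) : I) = v :=
      hesymm 0 _
    have hsnd : treeFnOf S e p = q := by
      funext x
      by_cases hx : x ∈ S
      · set z : Fin (Nat.card ↥S) := e ⟨x, hx⟩ with hz
        have hxz : x = ((e.symm z : ↥S) : I) := by rw [hz, e.symm_apply_apply]
        have hxq : x = q^[(z : ℕ)] v := by
          rw [hxz]
          exact hesymm (z : ℕ) z.2
        by_cases hlt : (z : ℕ) + 1 < Nat.card ↥S
        · rw [hxz, tf_step e p z hlt, hesymm _ hlt, ← hxz,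
            Function.iterate_succ_apply', ← hxq]
        · rw [hxz, tf_last e p z hlt, ← hxz]
          have hzval : (z : ℕ) = m0 := by
            have := z.2; omega
          have hxr : x = r := by rw [hxq, hzval, hm0spec]
          rw [hxr, hroot]
      · rw [tf_not_mem e p hx, hp]
        exact if_neg hx
    simp only [psi', Prod.mk.injEq, Subtype.mk.injEq]
    exact ⟨hfst, Subtype.ext hsnd⟩

end JoyalAux

/-- The number of directed trees on a nonempty finite set `I` is `|I| ^ (|I| - 1)`. -/
theorem stmt0 (I : Type*) [Fintype I] [Nonempty I] :
    Nat.card {p : I → I // IsTreeFn p} = Fintype.card I ^ (Fintype.card I - 1) := by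
  classical
  set n := Fintype.card I with hn
  have hA : Nat.card (Σ S : Set I, Equiv.Perm ↥S × Forest S) = Nat.card (I → I) :=
    Nat.card_congr (Equiv.ofBijective _ psi_bijective)
  have hB : Nat.card (Σ S : Set I, (↥S ≃ Fin (Nat.card ↥S)) × Forest S)
      = Nat.card (I × {p : I → I // IsTreeFn p}) :=
    Nat.card_congr (Equiv.ofBijective _ psi'_bijective)
  have hAB : Nat.card (Σ S : Set I, Equiv.Perm ↥S × Forest S)
      = Nat.card (Σ S : Set I, (↥S ≃ Fin (Nat.card ↥S)) × Forest S) :=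
    Nat.card_congr (Equiv.sigmaCongrRight fun S =>
      Equiv.prodCongr (Equiv.equivCongr (Equiv.refl _) (Finite.equivFin ↥S)) (Equiv.refl _))
  have key : n * Nat.card {p : I → I // IsTreeFn p} = n ^ n := by
    have h1 : Nat.card (I × {p : I → I // IsTreeFn p})
        = n * Nat.card {p : I → I // IsTreeFn p} := by
      rw [Nat.card_prod, Nat.card_eq_fintype_card]
    have h2 : Nat.card (I → I) = n ^ n := by
      rw [Nat.card_eq_fintype_card, Fintype.card_fun]
    omega
  have hpos : 0 < n := Fintype.card_pos
  have hsucc : n - 1 + 1 = n := Nat.succ_pred_eq_of_pos hpos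
  have hpow : n * n ^ (n - 1) = n ^ n := by
    rw [← pow_succ', hsucc]
  exact Nat.eq_of_mul_eq_mul_left hpos (key.trans hpow.symm)
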